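/- For the coupled logistic system, the one-step distance satisfies Δ_{n+1} ≤ (1-k)|c_1 - c_2| + 4c_1(1-k)Δ_n for all n ≥ 0. -/
import Mathlib

theorem stmt1 (c1 c2 k : ℝ) (hc1 : 0 < c1) (hc1' : c1 ≤ 1) (hc2 : 0 < c2) (hc2' : c2 ≤ 1)
    (hk0 : 0 < k) (hk1 : k < 1)
    (x y : ℕ → ℝ)
    (hxI : ∀ n, x n ∈ Set.Icc (-1:ℝ) 1) (hyI : ∀ n, y n ∈ Set.Icc (-1:ℝ) 1)
    (hx : ∀ n, x (n + 1) = c1 * (1 - 2 * (x n) ^ 2))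
    (hy : ∀ n, y (n + 1) = (1 - k) * c2 * (1 - 2 * (y n) ^ 2) + c1 * k * (1 - 2 * (x n) ^ 2)) :
    ∀ n, |x (n + 1) - y (n + 1)| ≤ (1 - k) * |c1 - c2| + 4 * c1 * (1 - k) * |x n - y n| := by
  intro n
  obtain ⟨hx1, hx2⟩ := hxI n
  obtain ⟨hy1, hy2⟩ := hyI n
  have hk : (0:ℝ) ≤ 1 - k := by linarith
  have key : x (n+1) - y (n+1)
      = (1-k) * ((c1-c2)*(1 - 2*(y n)^2) - 2*c1*((x n + y n)*(x n - y n))) := by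
    rw [hx, hy]; ring
  have h1 : |1 - 2*(y n)^2| ≤ 1 := by
    rw [abs_le]; constructor <;> nlinarith
  have h2 : |x n + y n| ≤ 2 := by
    rw [abs_le]; constructor <;> linarith
  have h3 : |(c1-c2)*(1 - 2*(y n)^2) - 2*c1*((x n + y n)*(x n - y n))|
      ≤ |c1-c2| + 4*c1*|x n - y n| := by
    calc |(c1-c2)*(1 - 2*(y n)^2) - 2*c1*((x n + y n)*(x n - y n))|
        ≤ |(c1-c2)*(1 - 2*(y n)^2)| + |2*c1*((x n + y n)*(x n - y n))| :=
          abs_sub _ _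
      _ = |c1-c2| * |1 - 2*(y n)^2| + 2*c1*(|x n + y n| * |x n - y n|) := by
          rw [abs_mul, abs_mul, abs_mul, abs_mul, abs_of_nonneg hc1.le,
            abs_of_nonneg (by norm_num : (0:ℝ) ≤ 2)]
      _ ≤ |c1-c2| * 1 + 2*c1*(2 * |x n - y n|) := by
          gcongr
      _ = |c1-c2| + 4*c1*|x n - y n| := by ring
  calc |x (n+1) - y (n+1)|
      = (1-k) * |(c1-c2)*(1 - 2*(y n)^2) - 2*c1*((x n + y n)*(x n - y n))| := by
        rw [key, abs_mul, abs_of_nonneg hk]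
    _ ≤ (1-k) * (|c1-c2| + 4*c1*|x n - y n|) := by gcongr
    _ = (1 - k) * |c1 - c2| + 4 * c1 * (1 - k) * |x n - y n| := by ring
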